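/- Let H be a finite-dimensional Hopf algebra over a field F and φ a non-zero left integral in the dual Hopf algebra Ĥ (i.e. α·φ = α(1)φ for all α ∈ Ĥ). Then strong left invariance holds: for all b, c ∈ H, (id ⊗ φ)((1 ⊗ c)Δ(b)) = (id ⊗ φ)((S ⊗ id)(Δ(c))(1 ⊗ b)), where S is the antipode of H. -/
import Mathlib


open TensorProduct

section Aux

variable (F H : Type*) [Field F] [Ring H] [HopfAlgebra F H]

/-- The map `(id ⊗ φ)` followed by `rid`, as a single linear map. -/
noncomputable def phiLeg (φ : H →ₗ[F] F) : H ⊗[F] H →ₗ[F] H :=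
  (TensorProduct.rid F H).toLinearMap ∘ₗ TensorProduct.map LinearMap.id φ

variable {F H}

@[simp] lemma phiLeg_tmul (φ : H →ₗ[F] F) (x y : H) :
    phiLeg F H φ (x ⊗ₜ[F] y) = φ y • x := by
  simp [phiLeg]

lemma phiLeg_mul_left (φ : H →ₗ[F] F) (u : H) (z : H ⊗[F] H) :
    phiLeg F H φ ((u ⊗ₜ[F] (1 : H)) * z) = u * phiLeg F H φ z := by
  induction z using TensorProduct.induction_on with
  | zero => simp
  | tmul x y => simp [Algebra.TensorProduct.tmul_mul_tmul, mul_smul_comm]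
  | add x y hx hy => simp [mul_add, hx, hy]

end Aux

set_option maxHeartbeats 1000000 in
set_option synthInstance.maxHeartbeats 400000 in
/-- Strong left invariance: for a finite-dimensional Hopf algebra `H` over a field `F`
and a non-zero left integral `φ` in the dual Hopf algebra (expressed by the left
invariance `(id ⊗ φ) ∘ Δ = φ(·)1`), one has
`(id ⊗ φ)((1 ⊗ c)Δ(b)) = (id ⊗ φ)((S ⊗ id)(Δ(c))(1 ⊗ b))` for all `b c ∈ H`. -/
theorem strong_left_invariance
    (F H : Type*) [Field F] [Ring H] [HopfAlgebra F H] [FiniteDimensional F H]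
    (φ : H →ₗ[F] F) (hφ0 : φ ≠ 0)
    (hφ : ∀ x : H,
      TensorProduct.rid F H
        (TensorProduct.map (LinearMap.id : H →ₗ[F] H) φ (Coalgebra.comul (R := F) x))
        = φ x • (1 : H)) :
    ∀ b c : H,
      TensorProduct.rid F H
        (TensorProduct.map (LinearMap.id : H →ₗ[F] H) φ
          (((1 : H) ⊗ₜ[F] c) * Coalgebra.comul (R := F) b))
        =
      TensorProduct.rid F H
        (TensorProduct.map (LinearMap.id : H →ₗ[F] H) φ
          ((TensorProduct.map (HopfAlgebra.antipode (R := F)) (LinearMap.id : H →ₗ[F] H)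
              (Coalgebra.comul (R := F) c)) * ((1 : H) ⊗ₜ[F] b))) := by
  intro b c
  set S : H →ₗ[F] H := HopfAlgebra.antipode (R := F) with hS
  set f : H ⊗[F] H →ₗ[F] H := phiLeg F H φ with hf
  -- restate the left-invariance hypothesis through `f`
  have hφ' : ∀ x : H, f (Coalgebra.comul (R := F) x) = φ x • (1 : H) := fun x => hφ x
  -- the auxiliary map  u ⊗ z ↦ S(u) * f(z * Δb)
  set h : H ⊗[F] (H ⊗[F] H) →ₗ[F] H :=
    LinearMap.mul' F H ∘ₗ
      TensorProduct.map S (f ∘ₗ LinearMap.mulRight F (Coalgebra.comul (R := F) b)) with hh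
  have h_tmul : ∀ (u : H) (z : H ⊗[F] H),
      h (u ⊗ₜ[F] z) = S u * f (z * Coalgebra.comul (R := F) b) := by
    intro u z; simp [hh, LinearMap.mul'_apply]
  -- Step 1: rewrite the RHS via `h` and `(id ⊗ Δ) Δ c`
  have E1 : ∀ z : H ⊗[F] H,
      f ((TensorProduct.map S (LinearMap.id : H →ₗ[F] H) z) * ((1 : H) ⊗ₜ[F] b))
        = h ((Coalgebra.comul (R := F) (A := H)).lTensor H z) := by
    intro z
    induction z using TensorProduct.induction_on with
    | zero => simp
    | tmul u v =>
        rw [map_tmul, LinearMap.lTensor_tmul, h_tmul]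
        rw [← Bialgebra.comul_mul, hφ']
        simp [hf, Algebra.TensorProduct.tmul_mul_tmul, mul_smul_comm]
    | add x y hx hy => simp [add_mul, hx, hy]
  -- the antipode-fold map  u ⊗ v ↦ S(u) * v
  set ms : H ⊗[F] H →ₗ[F] H := LinearMap.mul' F H ∘ₗ S.rTensor H with hms
  -- Step 2: unfold `h ∘ assoc`
  have E3 : ∀ z : (H ⊗[F] H) ⊗[F] H,
      h (TensorProduct.assoc F H H H z)
        = f ((ms.rTensor H z) * Coalgebra.comul (R := F) b) := by
    intro z
    induction z using TensorProduct.induction_on with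
    | zero => simp only [LinearEquiv.map_zero, map_zero, zero_mul]
    | tmul y w =>
        induction y using TensorProduct.induction_on with
        | zero => simp only [TensorProduct.zero_tmul, LinearEquiv.map_zero, map_zero, zero_mul]
        | tmul u v =>
            rw [TensorProduct.assoc_tmul, h_tmul, LinearMap.rTensor_tmul]
            rw [← phiLeg_mul_left (φ := φ) (u := S u), ← hf, ← mul_assoc]
            simp [hms, Algebra.TensorProduct.tmul_mul_tmul, LinearMap.mul'_apply]
        | add x y hx hy =>
            simp only [TensorProduct.add_tmul, LinearEquiv.map_add, map_add, add_mul] at *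
            rw [hx, hy]
    | add x y hx hy =>
        simp only [LinearEquiv.map_add, map_add, add_mul] at *
        rw [hx, hy]
  -- Step 3: the antipode and counit axioms collapse everything
  have E4 : (ms.rTensor H) ((Coalgebra.comul (R := F) (A := H)).rTensor H
      (Coalgebra.comul (R := F) c)) = (1 : H) ⊗ₜ[F] c := by
    rw [← LinearMap.comp_apply, ← LinearMap.rTensor_comp]
    have hcomp : ms ∘ₗ Coalgebra.comul (R := F) (A := H)
        = Algebra.linearMap F H ∘ₗ Coalgebra.counit := by
      rw [hms, LinearMap.comp_assoc, hS]
      exact HopfAlgebra.mul_antipode_rTensor_comul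
    rw [hcomp, LinearMap.rTensor_comp, LinearMap.comp_apply,
      Coalgebra.rTensor_counit_comul, LinearMap.rTensor_tmul]
    simp
  have main : f (((1 : H) ⊗ₜ[F] c) * Coalgebra.comul (R := F) b)
      = f ((TensorProduct.map S (LinearMap.id : H →ₗ[F] H)
          (Coalgebra.comul (R := F) c)) * ((1 : H) ⊗ₜ[F] b)) := by
    rw [E1, ← Coalgebra.coassoc_apply, E3, E4]
  exact main
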